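/- If w in F(A,B) has the form w = AB^{n₁}⋯AB^{n_j} with j ≥ 1 and each n_i ∈ {e, e+1} for some e > 0, then the automorphism of F(A,B) defined by A ↦ AB^{-e}, B ↦ B sends w to a word of strictly smaller length, provided e ≥ 1. -/

import Mathlib

abbrev F2 := FreeGroup Bool

def A : F2 := FreeGroup.of true

def B : F2 := FreeGroup.of false

/-- `(x, y)` is a basis (free generating pair) of the free group `F2 = F(A,B)`. -/
def IsBasis (x y : F2) : Prop := ∃ e : F2 ≃* F2, e A = x ∧ e B = y

/-- `w` is primitive: it is part of some basis of `F2`. -/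
def IsPrimitive (w : F2) : Prop := ∃ x y : F2, IsBasis x y ∧ (w = x ∨ w = y)

/-- A word all of whose letters are positive is reduced. -/
lemma reduce_eq_self_of_pos {α : Type*} [DecidableEq α] (L : List (α × Bool))
    (h : ∀ a ∈ L, a.2 = true) : FreeGroup.reduce L = L := by
  induction L with
  | nil => rfl
  | cons x L ih =>
    have hL : FreeGroup.reduce L = L := ih fun a ha => h a (List.mem_cons_of_mem _ ha)
    rw [FreeGroup.reduce.cons, hL]
    cases L with
    | nil => rfl
    | cons hd tl =>
      have hx : x.2 = true := h x List.mem_cons_self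
      have hhd : hd.2 = true := h hd (by simp)
      simp [hx, hhd]

lemma mk_flatten (α : Type*) (Ls : List (List (α × Bool))) :
    (Ls.map FreeGroup.mk).prod = FreeGroup.mk Ls.flatten := by
  induction Ls with
  | nil => simp [← FreeGroup.toWord_eq_nil_iff, FreeGroup.toWord_mk]; rfl
  | cons L Ls ih => simp [ih, FreeGroup.mul_mk]

/-- The list of letters of `A * B ^ k`. -/
def posList (k : ℕ) : List (Bool × Bool) := (true, true) :: List.replicate k (false, true)

lemma AB_eq (k : ℕ) : A * B ^ k = FreeGroup.mk (posList k) := by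
  have hB : B ^ k = FreeGroup.mk (List.replicate k (false, true)) := by
    rw [← FreeGroup.mk_toWord (x := B ^ k)]
    congr 1
    exact FreeGroup.toWord_of_pow false k
  have hA : A = FreeGroup.mk [(true, true)] := rfl
  rw [hA, hB, FreeGroup.mul_mk]
  rfl

lemma prod_toWord_length (j : ℕ) (k : Fin j → ℕ) :
    ((List.ofFn fun i => A * B ^ (k i)).prod).toWord.length
      = j + ∑ i, k i := by
  have h1 : (List.ofFn fun i => A * B ^ (k i))
      = (List.ofFn fun i => posList (k i)).map FreeGroup.mk := by
    simp [List.map_ofFn, Function.comp_def, AB_eq]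
  rw [h1, mk_flatten, FreeGroup.toWord_mk, reduce_eq_self_of_pos]
  · rw [List.length_flatten]
    simp only [List.map_ofFn, Function.comp_def, posList, List.length_cons,
      List.length_replicate, List.sum_ofFn]
    rw [Finset.sum_add_distrib]
    simp [add_comm]
  · intro a ha
    rw [List.mem_flatten] at ha
    obtain ⟨l, hl, hal⟩ := ha
    rw [List.mem_ofFn] at hl
    obtain ⟨i, rfl⟩ := hl
    rcases List.mem_cons.mp hal with rfl | h
    · rfl
    · exact (List.eq_of_mem_replicate h) ▸ rfl

theorem stmt_2 (j : ℕ) (hj : 1 ≤ j) (e : ℤ) (he : 1 ≤ e) (n : Fin j → ℤ)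
    (hn : ∀ i, n i = e ∨ n i = e + 1)
    (w : F2) (hw : w = (List.ofFn fun i => A * B ^ (n i)).prod)
    (φ : F2 →* F2) (hφ : φ = FreeGroup.lift fun b => if b then A * B ^ (-e) else B) :
    (φ w).toWord.length < w.toWord.length := by
  have hnpos : ∀ i, (0:ℤ) ≤ n i := by
    intro i; rcases hn i with h | h <;> omega
  have hw' : w = (List.ofFn fun i => A * B ^ (n i).toNat).prod := by
    rw [hw]; congr 1; rw [List.ofFn_inj]; funext i; rw [← zpow_natCast, Int.toNat_of_nonneg (hnpos i)]
  have hφw : φ w = (List.ofFn fun i => A * B ^ (n i - e).toNat).prod := by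
    rw [hw, map_list_prod, List.map_ofFn]
    congr 1; rw [List.ofFn_inj]; funext i
    simp only [Function.comp]
    rw [map_mul, map_zpow, hφ]
    simp only [A, B, FreeGroup.lift_apply_of, if_true, Bool.false_eq_true, if_false]
    show (A * B ^ (-e)) * B ^ (n i) = A * B ^ ((n i - e).toNat)
    rw [mul_assoc, ← zpow_add, ← zpow_natCast B ((n i - e).toNat),
      Int.toNat_of_nonneg (by rcases hn i with h | h <;> omega)]
    ring_nf
  rw [hφw, hw', prod_toWord_length, prod_toWord_length]
  have : ∑ i, (n i - e).toNat < ∑ i, (n i).toNat := by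
    apply Finset.sum_lt_sum_of_nonempty
    · exact Finset.univ_nonempty_iff.mpr (Fin.pos_iff_nonempty.mp hj)
    · intro i _; rcases hn i with h | h <;> omega
  omega
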